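/- Let π be a fully supported probability measure on a finite set Ω, let A ⊊ Ω be nonempty with π(A) > 0, and let δ ∈ (0,1). Among all probability measures ν on Ω with ν(A) ≥ π(A) + δ·π(Aᶜ), the minimum of ‖ν − π‖²_{2,π} is attained by ν_{A,δ} := δ·π_A + (1−δ)·π (where π_A is π conditioned on A), and this minimum equals δ²·π(Aᶜ)/π(A). -/

import Mathlib

noncomputable section

/-- `‖ν − π‖²_{2,π} = Σ_x π(x) (ν(x)/π(x) − 1)²`. -/
def chiSq {Ω : Type*} [Fintype Ω] (π ν : Ω → ℝ) : ℝ :=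
  ∑ x, π x * (ν x / π x - 1) ^ 2

/-- Let `π` be fully supported on finite `Ω`, `∅ ≠ A ⊊ Ω` and `δ ∈ (0,1)`.
Among all probability vectors `ν` with `ν(A) ≥ π(A) + δ·π(Aᶜ)`, the chi-squared distance from
`π` is minimized by `ν_{A,δ} = δ·π_A + (1−δ)·π`, and the minimum equals `δ²·π(Aᶜ)/π(A)`. -/
theorem stmt2 {Ω : Type*} [Fintype Ω] [DecidableEq Ω]
    (π : Ω → ℝ) (hπpos : ∀ x, 0 < π x) (hπsum : ∑ x, π x = 1)
    (A : Finset Ω) (hAne : A.Nonempty) (hAproper : A ≠ Finset.univ)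
    (δ : ℝ) (hδ0 : 0 < δ) (hδ1 : δ < 1) :
    -- the minimizer `ν_{A,δ} = δ·π_A + (1−δ)·π`
    (let νAδ : Ω → ℝ :=
      fun x => δ * (if x ∈ A then π x / (∑ y ∈ A, π y) else 0) + (1 - δ) * π x
    -- it belongs to the constraint class and attains the value `δ²·π(Aᶜ)/π(A)` …
    ((∑ x ∈ A, νAδ x) ≥ (∑ x ∈ A, π x) + δ * (∑ x ∈ Aᶜ, π x)) ∧
      chiSq π νAδ = δ ^ 2 * (∑ x ∈ Aᶜ, π x) / (∑ x ∈ A, π x)) ∧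
    -- … which is a lower bound for every probability vector in the class.
    (∀ ν : Ω → ℝ, (∀ x, 0 ≤ ν x) → (∑ x, ν x = 1) →
      (∑ x ∈ A, ν x) ≥ (∑ x ∈ A, π x) + δ * (∑ x ∈ Aᶜ, π x) →
      δ ^ 2 * (∑ x ∈ Aᶜ, π x) / (∑ x ∈ A, π x) ≤ chiSq π ν) := by
  set a := ∑ x ∈ A, π x with ha
  set b := ∑ x ∈ Aᶜ, π x with hb
  have hab : a + b = 1 := by
    rw [ha, hb, Finset.sum_add_sum_compl]; exact hπsum
  have hapos : 0 < a := Finset.sum_pos (fun x _ => hπpos x) hAne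
  have hbpos : 0 < b := by
    refine Finset.sum_pos (fun x _ => hπpos x) ?_
    rw [← Finset.compl_ne_univ_iff_nonempty, compl_compl] at *
    exact hAproper
  constructor
  · intro νAδ
    have hval : chiSq π νAδ = δ ^ 2 * b / a := by
      unfold chiSq
      rw [← Finset.sum_add_sum_compl A]
      have h1 : ∀ x ∈ A, π x * (νAδ x / π x - 1) ^ 2 = π x * (δ * b / a) ^ 2 := by
        intro x hx
        have hπx := (hπpos x).ne'
        simp only [νAδ, hx, if_pos]
        congr 1
        have hb1 : b = 1 - a := by linarith
        rw [hb1]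
        field_simp
        ring
      have h2 : ∀ x ∈ Aᶜ, π x * (νAδ x / π x - 1) ^ 2 = π x * δ ^ 2 := by
        intro x hx
        have hxA : x ∉ A := by simpa using hx
        have hπx := (hπpos x).ne'
        simp only [νAδ, hxA, if_neg, not_false_iff]
        have : (δ * 0 + (1 - δ) * π x) / π x - 1 = -δ := by field_simp; ring
        rw [this]; ring
      rw [Finset.sum_congr rfl h1, Finset.sum_congr rfl h2,
        ← Finset.sum_mul, ← Finset.sum_mul, ← ha, ← hb]
      have hb1 : b = 1 - a := by linarith
      rw [hb1]
      field_simp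
      ring
    refine ⟨?_, hval⟩
    have hsA : ∑ x ∈ A, νAδ x = a + δ * b := by
      have h0 : ∑ x ∈ A, (if x ∈ A then π x / a else 0) = 1 := by
        rw [Finset.sum_congr rfl (fun x hx => if_pos hx), ← Finset.sum_div, ← ha,
          div_self hapos.ne']
      simp only [νAδ]
      rw [Finset.sum_add_distrib, ← Finset.mul_sum, ← Finset.mul_sum, h0, ← ha]
      linear_combination (-δ) * hab
    rw [hsA]
  · intro ν hν0 hνsum hνA
    have key : ∀ s : Finset Ω, ∑ x ∈ s, π x * (ν x / π x - 1) ^ 2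
        = ∑ x ∈ s, (ν x - π x) ^ 2 / π x := by
      intro s
      refine Finset.sum_congr rfl fun x _ => ?_
      have hπx := (hπpos x).ne'
      field_simp
    have hcs : ∀ s : Finset Ω,
        (∑ x ∈ s, (ν x - π x)) ^ 2 / (∑ x ∈ s, π x) ≤ ∑ x ∈ s, (ν x - π x) ^ 2 / π x :=
      fun s => Finset.sq_sum_div_le_sum_sq_div s _ (fun x _ => hπpos x)
    have hdA : δ * b ≤ ∑ x ∈ A, (ν x - π x) := by
      rw [Finset.sum_sub_distrib, ← ha]; linarith
    have hdAc : δ * b ≤ -∑ x ∈ Aᶜ, (ν x - π x) := by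
      rw [Finset.sum_sub_distrib, ← hb]
      have := Finset.sum_add_sum_compl A ν
      rw [hνsum] at this
      linarith
    have hδb : 0 ≤ δ * b := by positivity
    have hsqA : (δ * b) ^ 2 ≤ (∑ x ∈ A, (ν x - π x)) ^ 2 :=
      pow_le_pow_left₀ hδb hdA 2
    have hsqAc : (δ * b) ^ 2 ≤ (∑ x ∈ Aᶜ, (ν x - π x)) ^ 2 := by
      rw [← neg_sq (∑ x ∈ Aᶜ, (ν x - π x))]
      exact pow_le_pow_left₀ hδb hdAc 2
    have hA1 : (δ * b) ^ 2 / a ≤ ∑ x ∈ A, (ν x - π x) ^ 2 / π x :=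
      le_trans (by gcongr) (hcs A)
    have hA2 : (δ * b) ^ 2 / b ≤ ∑ x ∈ Aᶜ, (ν x - π x) ^ 2 / π x :=
      le_trans (by gcongr) (hcs Aᶜ)
    have hchi : chiSq π ν
        = (∑ x ∈ A, (ν x - π x) ^ 2 / π x) + ∑ x ∈ Aᶜ, (ν x - π x) ^ 2 / π x := by
      unfold chiSq
      rw [← Finset.sum_add_sum_compl A, key A, key Aᶜ]
    have hfin : δ ^ 2 * b / a = (δ * b) ^ 2 / a + (δ * b) ^ 2 / b := by
      have hb1 : b = 1 - a := by linarith
      have h1a : (1:ℝ) - a ≠ 0 := by linarith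
      rw [hb1]
      field_simp
      ring
    rw [hchi, hfin]
    exact add_le_add hA1 hA2
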